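/- Let i be an irrational real number with 0 < i < 1, let q be a rational number with 19 < q < 20, let r be a rational number with 10 < r < 10 + i, let M = ([0, 5 + i/2] ∩ ℚ) ∪ (5 + i/2, ∞) regarded as an additive submonoid of the nonnegative reals, let F be a field, let R = F[X; M] be the monoid ring, let m be its maximal ideal of elements with zero constant term, and let D = R_m. Then in D the element X^{10+i} divides the product X^r · X^{q−r}, but there do not exist y, z ∈ D with y·z = X^{10+i}, y dividing X^r, and z dividing X^{q−r}; in particular the element X^{10+i} of D is not primal and D is not a pre-Schreier domain. -/

import Mathlib

open scoped Classical

/-- The "constant term" homomorphism of a monoid algebra `F[X; M]`, for a monoid `M` in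
which `a + b = 0` forces `a = b = 0`; it sends `a₁X^{α₁} + ⋯ + aₙX^{αₙ}` to its
coefficient at the identity `0` of `M` (see `constantTermHom_apply`). -/
noncomputable def constantTermHom (F M : Type*) [Field F] [AddCommMonoid M]
    (hM : ∀ a b : M, a + b = 0 → a = 0 ∧ b = 0) : AddMonoidAlgebra F M →ₐ[F] F :=
  AddMonoidAlgebra.lift F F M
    { toFun := fun a => if a.toAdd = 0 then 1 else 0
      map_one' := by simp
      map_mul' := fun a b => by
        rcases em (a.toAdd = 0) with ha | ha
        · rcases em (b.toAdd = 0) with hb | hb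
          · simp [ha, hb]
          · have h : a.toAdd + b.toAdd ≠ 0 := fun h => hb (hM _ _ h).2
            simp [ha, hb, toAdd_mul, h]
        · have h : a.toAdd + b.toAdd ≠ 0 := fun h => ha (hM _ _ h).1
          simp [ha, toAdd_mul, h] }

theorem constantTermHom_apply (F M : Type*) [Field F] [AddCommMonoid M]
    (hM : ∀ a b : M, a + b = 0 → a = 0 ∧ b = 0) (f : AddMonoidAlgebra F M) :
    constantTermHom F M hM f = f.coeff 0 := by
  classical
  rw [constantTermHom, AddMonoidAlgebra.lift_apply]
  simp only [MonoidHom.coe_mk, OneHom.coe_mk, toAdd_ofAdd, smul_eq_mul, mul_ite, mul_one,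
    mul_zero]
  rw [Finsupp.sum_ite_eq' f.coeff 0 (fun _ b => b)]
  split
  · rfl
  · next h => exact (Finsupp.notMem_support_iff.mp h).symm

/-- The augmentation ideal of the monoid algebra `F[X; M]`, consisting of all elements
with zero constant term (zero coefficient at the identity of `M`). -/
noncomputable def augIdeal (F M : Type*) [Field F] [AddCommMonoid M]
    (hM : ∀ a b : M, a + b = 0 → a = 0 ∧ b = 0) : Ideal (AddMonoidAlgebra F M) :=
  RingHom.ker (constantTermHom F M hM)

theorem mem_augIdeal_iff (F M : Type*) [Field F] [AddCommMonoid M]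
    (hM : ∀ a b : M, a + b = 0 → a = 0 ∧ b = 0) (f : AddMonoidAlgebra F M) :
    f ∈ augIdeal F M hM ↔ f.coeff 0 = 0 := by
  rw [augIdeal, RingHom.mem_ker, constantTermHom_apply]

/-- The augmentation ideal is a maximal ideal. -/
instance augIdeal_isMaximal (F M : Type*) [Field F] [AddCommMonoid M]
    {hM : ∀ a b : M, a + b = 0 → a = 0 ∧ b = 0} : (augIdeal F M hM).IsMaximal :=
  RingHom.ker_isMaximal_of_surjective _ (fun c =>
    ⟨AddMonoidAlgebra.single 0 c, by simp [constantTermHom]⟩)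

/-- The set `M = ([0, 5 + i/2] ∩ ℚ) ∪ (5 + i/2, ∞)` of nonnegative reals. -/
def Mcarrier (i : ℝ) : Set ℝ :=
  (Set.Icc (0 : ℝ) (5 + i / 2) ∩ Set.range ((↑) : ℚ → ℝ)) ∪ Set.Ioi (5 + i / 2)

theorem Mcarrier.nonneg {i : ℝ} (hi0 : 0 < i) {x : ℝ} (hx : x ∈ Mcarrier i) : 0 ≤ x := by
  rcases hx with ⟨⟨h1, _⟩, _⟩ | h
  · exact h1
  · have : (0 : ℝ) < 5 + i / 2 := by linarith
    exact le_of_lt (lt_trans this h)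

theorem Mcarrier.add_mem {i : ℝ} (hi0 : 0 < i) {a b : ℝ}
    (ha : a ∈ Mcarrier i) (hb : b ∈ Mcarrier i) : a + b ∈ Mcarrier i := by
  rcases ha with ⟨⟨ha1, ha2⟩, ⟨p, hp⟩⟩ | ha
  · rcases hb with ⟨⟨hb1, hb2⟩, ⟨s, hs⟩⟩ | hb
    · rcases lt_or_ge (5 + i / 2) (a + b) with h | h
      · exact Or.inr h
      · exact Or.inl ⟨⟨by linarith, h⟩, ⟨p + s, by push_cast [hp, hs]; ring⟩⟩
    · exact Or.inr (by simp only [Set.mem_Ioi] at hb ⊢; linarith)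
  · have hb0 : 0 ≤ b := Mcarrier.nonneg hi0 hb
    exact Or.inr (by simp only [Set.mem_Ioi] at ha ⊢; linarith)

/-- `M` as an additive submonoid of the reals. -/
def Msubmonoid (i : ℝ) (hi0 : 0 < i) : AddSubmonoid ℝ where
  carrier := Mcarrier i
  zero_mem' := Or.inl ⟨⟨le_refl 0, by linarith⟩, ⟨0, by norm_num⟩⟩
  add_mem' := fun ha hb => Mcarrier.add_mem hi0 ha hb

theorem Msubmonoid_pos_monoid (i : ℝ) (hi0 : 0 < i) :
    ∀ a b : Msubmonoid i hi0, a + b = 0 → a = 0 ∧ b = 0 := fun a b h => by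
  have hs : (a : ℝ) + (b : ℝ) = 0 := by
    have := congrArg Subtype.val h
    push_cast at this
    exact this
  have ha := Mcarrier.nonneg hi0 a.2
  have hb := Mcarrier.nonneg hi0 b.2
  refine ⟨Subtype.ext ?_, Subtype.ext ?_⟩ <;>
    simp only [ZeroMemClass.coe_zero] <;> linarith

theorem mem_M_ten_add (i : ℝ) (hi0 : 0 < i) : 10 + i ∈ Msubmonoid i hi0 := by
  have h : 10 + i ∈ Set.Ioi (5 + i / 2) := by simp only [Set.mem_Ioi]; linarith
  exact Or.inr h

theorem mem_M_r (i : ℝ) (hi0 : 0 < i) (hi1 : i < 1) (r : ℚ) (hr1 : 10 < (r : ℝ)) :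
    (r : ℝ) ∈ Msubmonoid i hi0 := by
  have h : (r : ℝ) ∈ Set.Ioi (5 + i / 2) := by simp only [Set.mem_Ioi]; linarith
  exact Or.inr h

theorem mem_M_qr (i : ℝ) (hi0 : 0 < i) (hi1 : i < 1) (q r : ℚ) (hq1 : 19 < (q : ℝ))
    (hr2 : (r : ℝ) < 10 + i) : (q : ℝ) - (r : ℝ) ∈ Msubmonoid i hi0 := by
  have h : (q : ℝ) - (r : ℝ) ∈ Set.Ioi (5 + i / 2) := by simp only [Set.mem_Ioi]; linarith
  exact Or.inr h

/-- The image in `D = R_m` of the monomial `X^α` of `R = F[X; M]`. -/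
noncomputable def monoM (i : ℝ) (hi0 : 0 < i) (F : Type*) [Field F] (α : ℝ)
    (hα : α ∈ Msubmonoid i hi0) :
    Localization.AtPrime (augIdeal F (Msubmonoid i hi0) (Msubmonoid_pos_monoid i hi0)) :=
  algebraMap (AddMonoidAlgebra F (Msubmonoid i hi0))
    (Localization.AtPrime (augIdeal F (Msubmonoid i hi0) (Msubmonoid_pos_monoid i hi0)))
    (AddMonoidAlgebra.single (⟨α, hα⟩ : Msubmonoid i hi0) (1 : F))

section Ord
variable {F : Type*} [Field F] {N : AddSubmonoid ℝ}

noncomputable def ordA (f : AddMonoidAlgebra F N) : N :=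
  if h : f = 0 then 0 else f.coeff.support.min' (Finsupp.support_nonempty_iff.mpr (mt AddMonoidAlgebra.coeff_eq_zero.mp h))

theorem ordA_mem_support {f : AddMonoidAlgebra F N} (hf : f ≠ 0) : ordA f ∈ f.coeff.support := by
  rw [ordA, dif_neg hf]; exact Finset.min'_mem _ _

theorem ordA_le {f : AddMonoidAlgebra F N} (hf : f ≠ 0) {a : N} (ha : a ∈ f.coeff.support) :
    ordA f ≤ a := by
  rw [ordA, dif_neg hf]; exact Finset.min'_le _ _ ha

theorem apply_ordA_add_ordA (f g : AddMonoidAlgebra F N) (hf : f ≠ 0) (hg : g ≠ 0) :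
    (f * g).coeff (ordA f + ordA g) = f.coeff (ordA f) * g.coeff (ordA g) := by
  rw [AddMonoidAlgebra.coeff_mul, Finsupp.sum, Finset.sum_eq_single (ordA f)]
  · rw [Finsupp.sum, Finset.sum_eq_single (ordA g)]
    · rw [if_pos rfl]
    · intro b hb hbne
      rw [if_neg]
      intro h
      exact hbne (add_left_cancel h)
    · intro hb
      rw [Finsupp.notMem_support_iff.mp hb, mul_zero, if_pos rfl]
  · intro a ha hane
    rw [Finsupp.sum]
    apply Finset.sum_eq_zero
    intro b hb
    rw [if_neg]
    intro h
    have h1 : ordA f < a := lt_of_le_of_ne (ordA_le hf ha) (Ne.symm hane)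
    have h2 : ordA g ≤ b := ordA_le hg hb
    have := add_lt_add_of_lt_of_le h1 h2
    rw [h] at this
    exact lt_irrefl _ this
  · intro ha
    exact absurd (ordA_mem_support hf) ha

theorem ordA_mul {f g : AddMonoidAlgebra F N} (hf : f ≠ 0) (hg : g ≠ 0) :
    ordA (f * g) = ordA f + ordA g := by
  have hne : (f * g).coeff (ordA f + ordA g) ≠ 0 := by
    rw [apply_ordA_add_ordA f g hf hg]
    exact mul_ne_zero (Finsupp.mem_support_iff.mp (ordA_mem_support hf))
      (Finsupp.mem_support_iff.mp (ordA_mem_support hg))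
  have hfg : f * g ≠ 0 := fun h => hne (by rw [h]; rfl)
  apply le_antisymm
  · exact ordA_le hfg (Finsupp.mem_support_iff.mpr hne)
  · have hmem := ordA_mem_support hfg
    have hsub := AddMonoidAlgebra.support_coeff_mul_subset f g hmem
    obtain ⟨a, ha, b, hb, hab⟩ := Finset.mem_add.mp hsub
    rw [← hab]
    exact add_le_add (ordA_le hf ha) (ordA_le hg hb)

theorem ordA_single (a : N) : ordA (AddMonoidAlgebra.single a (1 : F)) = a := by
  rw [ordA, dif_neg (fun h => one_ne_zero (α := F) (AddMonoidAlgebra.single_eq_zero.mp h))]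
  simp [AddMonoidAlgebra.coeff_single, Finsupp.support_single_ne_zero a (one_ne_zero (α := F))]

theorem ordA_eq_zero (hN : ∀ x : N, 0 ≤ (x : ℝ)) {f : AddMonoidAlgebra F N}
    (h0 : f.coeff 0 ≠ 0) : ordA f = 0 := by
  have hf : f ≠ 0 := fun h => h0 (by rw [h]; rfl)
  apply le_antisymm (ordA_le hf (Finsupp.mem_support_iff.mpr h0))
  have : (0 : ℝ) ≤ ((ordA f : N) : ℝ) := hN _
  exact Subtype.coe_le_coe.mp (by simpa using this)

end Ord

/-- With `i` irrational, `0 < i < 1`, `q ∈ ℚ`, `19 < q < 20`, `r ∈ ℚ`,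
`10 < r < 10 + i`, `M = ([0, 5 + i/2] ∩ ℚ) ∪ (5 + i/2, ∞)`, `F` a field, `R = F[X; M]`,
`m` its maximal ideal of elements with zero constant term and `D = R_m`: in `D` the
element `X^{10+i}` divides `X^r · X^{q-r}`, but there are no `y, z ∈ D` with
`y·z = X^{10+i}`, `y ∣ X^r` and `z ∣ X^{q-r}`; in particular `X^{10+i}` is not primal
in `D` and `D` is not a pre-Schreier domain. -/
theorem localization_monoidAlgebra_M_not_preSchreier (i : ℝ) (hi : Irrational i)
    (hi0 : 0 < i) (hi1 : i < 1) (q : ℚ) (hq1 : 19 < (q : ℝ)) (hq2 : (q : ℝ) < 20)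
    (r : ℚ) (hr1 : 10 < (r : ℝ)) (hr2 : (r : ℝ) < 10 + i) (F : Type*) [Field F] :
    (monoM i hi0 F (10 + i) (mem_M_ten_add i hi0) ∣
      monoM i hi0 F r (mem_M_r i hi0 hi1 r hr1) *
      monoM i hi0 F ((q : ℝ) - (r : ℝ)) (mem_M_qr i hi0 hi1 q r hq1 hr2)) ∧
    (¬∃ y z : Localization.AtPrime
        (augIdeal F (Msubmonoid i hi0) (Msubmonoid_pos_monoid i hi0)),
      y * z = monoM i hi0 F (10 + i) (mem_M_ten_add i hi0) ∧
      y ∣ monoM i hi0 F r (mem_M_r i hi0 hi1 r hr1) ∧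
      z ∣ monoM i hi0 F ((q : ℝ) - (r : ℝ)) (mem_M_qr i hi0 hi1 q r hq1 hr2)) ∧
    ¬IsPrimal (monoM i hi0 F (10 + i) (mem_M_ten_add i hi0)) ∧
    ¬(∀ c : Localization.AtPrime
        (augIdeal F (Msubmonoid i hi0) (Msubmonoid_pos_monoid i hi0)), IsPrimal c) := by
  classical
  set m := augIdeal F (Msubmonoid i hi0) (Msubmonoid_pos_monoid i hi0) with hm
  set R := AddMonoidAlgebra F (Msubmonoid i hi0) with hR
  have hq10 : (q : ℝ) - 10 - i ∈ Msubmonoid i hi0 :=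
    Or.inr (by simp only [Set.mem_Ioi]; linarith)
  set X10 : R := AddMonoidAlgebra.single (⟨10 + i, mem_M_ten_add i hi0⟩ : Msubmonoid i hi0) (1 : F) with hX10def
  set Xr : R := AddMonoidAlgebra.single (⟨(r : ℝ), mem_M_r i hi0 hi1 r hr1⟩ : Msubmonoid i hi0) (1 : F) with hXrdef
  set Xqr : R := AddMonoidAlgebra.single (⟨(q : ℝ) - (r : ℝ), mem_M_qr i hi0 hi1 q r hq1 hr2⟩ : Msubmonoid i hi0) (1 : F) with hXqrdef
  have hdvd : monoM i hi0 F (10 + i) (mem_M_ten_add i hi0) ∣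
      monoM i hi0 F r (mem_M_r i hi0 hi1 r hr1) *
      monoM i hi0 F ((q : ℝ) - (r : ℝ)) (mem_M_qr i hi0 hi1 q r hq1 hr2) := by
    refine ⟨algebraMap R (Localization.AtPrime m)
      (AddMonoidAlgebra.single (⟨(q : ℝ) - 10 - i, hq10⟩ : Msubmonoid i hi0) (1 : F)), ?_⟩
    show algebraMap R (Localization.AtPrime m) Xr * algebraMap R (Localization.AtPrime m) Xqr =
      algebraMap R (Localization.AtPrime m) X10 * _
    rw [← map_mul, ← map_mul, hX10def, hXrdef, hXqrdef,
      AddMonoidAlgebra.single_mul_single, AddMonoidAlgebra.single_mul_single, one_mul]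
    have hxy : (⟨(r : ℝ), mem_M_r i hi0 hi1 r hr1⟩ + ⟨(q : ℝ) - (r : ℝ), mem_M_qr i hi0 hi1 q r hq1 hr2⟩ :
        Msubmonoid i hi0) = ⟨10 + i, mem_M_ten_add i hi0⟩ + ⟨(q : ℝ) - 10 - i, hq10⟩ :=
      Subtype.ext (by push_cast; ring)
    rw [hxy]
  have hnot : ¬∃ y z : Localization.AtPrime
        (augIdeal F (Msubmonoid i hi0) (Msubmonoid_pos_monoid i hi0)),
      y * z = monoM i hi0 F (10 + i) (mem_M_ten_add i hi0) ∧
      y ∣ monoM i hi0 F r (mem_M_r i hi0 hi1 r hr1) ∧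
      z ∣ monoM i hi0 F ((q : ℝ) - (r : ℝ)) (mem_M_qr i hi0 hi1 q r hq1 hr2) := by
    rintro ⟨y, z, hyz, hy, hz⟩
    have hNneg : ∀ x : (Msubmonoid i hi0), 0 ≤ (x : ℝ) := fun x => Mcarrier.nonneg hi0 x.2
    have hinj : Function.Injective (algebraMap R (Localization.AtPrime m)) :=
      IsLocalization.injective _ m.primeCompl_le_nonZeroDivisors
    have hcne : ∀ w : m.primeCompl, ((w : R)).coeff 0 ≠ 0 := fun w hh =>
      w.2 ((mem_augIdeal_iff F (Msubmonoid i hi0) (Msubmonoid_pos_monoid i hi0) _).mpr hh)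
    have hwne : ∀ w : m.primeCompl, (w : R) ≠ 0 := fun w hh => hcne w (by rw [hh]; rfl)
    have hword : ∀ w : m.primeCompl, ordA (w : R) = 0 := fun w => ordA_eq_zero hNneg (hcne w)
    obtain ⟨⟨f, s⟩, hfs⟩ := IsLocalization.surj m.primeCompl y
    obtain ⟨⟨g, t⟩, hgt⟩ := IsLocalization.surj m.primeCompl z
    obtain ⟨c, hc⟩ := hy
    obtain ⟨d, hd⟩ := hz
    obtain ⟨⟨h, u⟩, hhu⟩ := IsLocalization.surj m.primeCompl c
    obtain ⟨⟨k, v⟩, hkv⟩ := IsLocalization.surj m.primeCompl d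
    have hyz' : algebraMap R (Localization.AtPrime m) X10 = y * z := hyz.symm
    have hc' : algebraMap R (Localization.AtPrime m) Xr = y * c := hc
    have hd' : algebraMap R (Localization.AtPrime m) Xqr = z * d := hd
    have hX10 : X10 ≠ 0 := fun hh => one_ne_zero (α := F) (AddMonoidAlgebra.single_eq_zero.mp hh)
    have hXr : Xr ≠ 0 := fun hh => one_ne_zero (α := F) (AddMonoidAlgebra.single_eq_zero.mp hh)
    have hXqr : Xqr ≠ 0 := fun hh => one_ne_zero (α := F) (AddMonoidAlgebra.single_eq_zero.mp hh)
    have e1 : f * g = X10 * ↑(s * t) := by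
      apply hinj
      simp only [map_mul, Submonoid.coe_mul]
      rw [hyz', ← hfs, ← hgt]
      ring
    have e2 : Xr * ↑(s * u) = f * h := by
      apply hinj
      simp only [map_mul, Submonoid.coe_mul]
      rw [hc', ← hfs, ← hhu]
      ring
    have e3 : Xqr * ↑(t * v) = g * k := by
      apply hinj
      simp only [map_mul, Submonoid.coe_mul]
      rw [hd', ← hgt, ← hkv]
      ring
    have hfg : f * g ≠ 0 := by rw [e1]; exact mul_ne_zero hX10 (hwne (s * t))
    have hf : f ≠ 0 := left_ne_zero_of_mul hfg
    have hg : g ≠ 0 := right_ne_zero_of_mul hfg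
    have hfh : f * h ≠ 0 := by rw [← e2]; exact mul_ne_zero hXr (hwne (s * u))
    have hh : h ≠ 0 := right_ne_zero_of_mul hfh
    have hgk : g * k ≠ 0 := by rw [← e3]; exact mul_ne_zero hXqr (hwne (t * v))
    have hk : k ≠ 0 := right_ne_zero_of_mul hgk
    have o1 : ordA f + ordA g = (⟨10 + i, mem_M_ten_add i hi0⟩ : Msubmonoid i hi0) := by
      have hcon := congrArg ordA e1
      rw [ordA_mul hf hg, ordA_mul hX10 (hwne (s * t)), hword (s * t), add_zero,
        hX10def, ordA_single] at hcon
      exact hcon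
    have o2 : (⟨(r : ℝ), mem_M_r i hi0 hi1 r hr1⟩ : Msubmonoid i hi0) = ordA f + ordA h := by
      have hcon := congrArg ordA e2
      rw [ordA_mul hXr (hwne (s * u)), ordA_mul hf hh, hword (s * u), add_zero,
        hXrdef, ordA_single] at hcon
      exact hcon
    have o3 : (⟨(q : ℝ) - (r : ℝ), mem_M_qr i hi0 hi1 q r hq1 hr2⟩ : Msubmonoid i hi0)
        = ordA g + ordA k := by
      have hcon := congrArg ordA e3
      rw [ordA_mul hXqr (hwne (t * v)), ordA_mul hg hk, hword (t * v), add_zero,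
        hXqrdef, ordA_single] at hcon
      exact hcon
    set a : ℝ := ((ordA f : Msubmonoid i hi0) : ℝ) with hadef
    set b : ℝ := ((ordA g : Msubmonoid i hi0) : ℝ) with hbdef
    have rab : a + b = 10 + i := by
      have := congrArg (Subtype.val) o1
      push_cast at this
      exact this
    have rra : (r : ℝ) = a + ((ordA h : Msubmonoid i hi0) : ℝ) := by
      have := congrArg (Subtype.val) o2
      push_cast at this
      exact this
    have rqb : (q : ℝ) - (r : ℝ) = b + ((ordA k : Msubmonoid i hi0) : ℝ) := by
      have := congrArg (Subtype.val) o3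
      push_cast at this
      exact this
    have ha_mem : a ∈ Mcarrier i := (ordA f : Msubmonoid i hi0).2
    have hb_mem : b ∈ Mcarrier i := (ordA g : Msubmonoid i hi0).2
    have hra_mem : (r : ℝ) - a ∈ Mcarrier i := by
      have : (r : ℝ) - a = ((ordA h : Msubmonoid i hi0) : ℝ) := by linarith
      rw [this]
      exact (ordA h : Msubmonoid i hi0).2
    have hqb_mem : (q : ℝ) - (r : ℝ) - b ∈ Mcarrier i := by
      have : (q : ℝ) - (r : ℝ) - b = ((ordA k : Msubmonoid i hi0) : ℝ) := by linarith
      rw [this]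
      exact (ordA k : Msubmonoid i hi0).2
    rcases ha_mem with ⟨⟨ha0, ha1⟩, p, hp⟩ | ha2
    · rcases hqb_mem with ⟨⟨_, _⟩, p', hp'⟩ | h2
      · have hirr : Irrational ((q : ℝ) - (r : ℝ) - b) := by
          have heq : (q : ℝ) - (r : ℝ) - b = ((q - r - 10 + p : ℚ) : ℝ) - i := by
            push_cast
            linarith
          rw [heq]
          exact hi.ratCast_sub _
        exact hirr ⟨p', hp'⟩
      · simp only [Set.mem_Ioi] at h2
        linarith
    · rcases hb_mem with ⟨⟨hb0, hb1⟩, p, hp⟩ | hb2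
      · rcases hra_mem with ⟨⟨_, _⟩, p', hp'⟩ | h2
        · have hirr : Irrational ((r : ℝ) - a) := by
            have heq : (r : ℝ) - a = ((r - 10 + p : ℚ) : ℝ) - i := by
              push_cast
              linarith
            rw [heq]
            exact hi.ratCast_sub _
          exact hirr ⟨p', hp'⟩
        · simp only [Set.mem_Ioi] at h2 ha2
          linarith
      · simp only [Set.mem_Ioi] at ha2 hb2
        linarith
  refine ⟨hdvd, hnot, ?_, ?_⟩
  · intro hpr
    obtain ⟨c1, c2, hc1, hc2, hc12⟩ := hpr hdvd
    exact hnot ⟨c1, c2, hc12.symm, hc1, hc2⟩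
  · intro hall
    obtain ⟨c1, c2, hc1, hc2, hc12⟩ := hall _ hdvd
    exact hnot ⟨c1, c2, hc12.symm, hc1, hc2⟩
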